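/- Let A be a finite abelian group with |A| = k ≥ 3. For a finite simple graph G with vertex set {v₁, …, vₙ}, let G′ be the graph obtained from G by adding n new vertices v₁′, …, vₙ′ and the n new edges vᵢvᵢ′ for i = 1, …, n. Then G has a proper vertex coloring with k colors if and only if G′ has an additive coloring over A. -/

import Mathlib

/-- The sum of the values of `f` over the neighborhood of `u` in `G`. -/
noncomputable def nsum {V : Type*} [Fintype V] {M : Type*} [AddCommMonoid M]
    (G : SimpleGraph V) (f : V → M) (u : V) : M :=
  letI := Classical.decRel G.Adj
  ∑ x ∈ G.neighborFinset u, f x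

/-- `f` is an additive coloring of `G` with values in the abelian group `M`:
adjacent vertices have different neighborhood sums. -/
def IsAddColoring {V : Type*} [Fintype V] {M : Type*} [AddCommMonoid M]
    (G : SimpleGraph V) (f : V → M) : Prop :=
  ∀ ⦃u v : V⦄, G.Adj u v → nsum G f u ≠ nsum G f v

/-- The graph `G'` obtained from `G` (on vertex set `V`, copied as `Sum.inl`) by adding,
for each vertex `vᵢ`, a new pendant vertex `vᵢ'` (copied as `Sum.inr`) joined to `vᵢ`
by an edge. -/
def pendantGraph {V : Type*} (G : SimpleGraph V) : SimpleGraph (V ⊕ V) where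
  Adj x y :=
    match x, y with
    | Sum.inl u, Sum.inl v => G.Adj u v
    | Sum.inl u, Sum.inr v => u = v
    | Sum.inr u, Sum.inl v => v = u
    | Sum.inr _, Sum.inr _ => False
  symm := by
    refine ⟨?_⟩
    rintro (u | u) (v | v) h
    · exact G.adj_symm h
    · exact h
    · exact h
    · exact h.elim
  loopless := by
    refine ⟨?_⟩
    rintro (u | u) h
    · exact G.irrefl h
    · exact h.elim


lemma nsum_pendant_inr {V : Type*} [Fintype V] {M : Type*} [AddCommMonoid M]
    (G : SimpleGraph V) (f : V ⊕ V → M) (u : V) :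
    nsum (pendantGraph G) f (Sum.inr u) = f (Sum.inl u) := by
  classical
  unfold nsum
  rw [show (pendantGraph G).neighborFinset (Sum.inr u) = {Sum.inl u} by
    ext x
    rcases x with v | v <;>
      simp only [SimpleGraph.mem_neighborFinset] <;>
      simp [SimpleGraph.mem_neighborFinset, pendantGraph, eq_comm]]
  simp

lemma nsum_pendant_inl {V : Type*} [Fintype V] {M : Type*} [AddCommMonoid M]
    (G : SimpleGraph V) (f : V ⊕ V → M) (u : V) :
    letI := Classical.decRel G.Adj
    nsum (pendantGraph G) f (Sum.inl u) =
      (∑ v ∈ G.neighborFinset u, f (Sum.inl v)) + f (Sum.inr u) := by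
  classical
  unfold nsum
  rw [show (pendantGraph G).neighborFinset (Sum.inl u)
      = insert (Sum.inr u) ((G.neighborFinset u).map ⟨Sum.inl, Sum.inl_injective⟩) by
    ext x
    rcases x with v | v <;>
      simp only [SimpleGraph.mem_neighborFinset] <;>
      simp [SimpleGraph.mem_neighborFinset, pendantGraph, eq_comm]]
  rw [Finset.sum_insert (by simp), Finset.sum_map]
  simp [add_comm]

/-- Let `A` be a finite abelian group with `|A| = k ≥ 3`. A finite simple graph `G`
has a proper vertex coloring with `k` colors if and only if the graph `G'` obtained
from `G` by attaching a pendant vertex to each vertex has an additive coloring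
over `A`. -/
theorem colorable_iff_pendant_additive_coloring
    {V : Type*} [Fintype V] (G : SimpleGraph V)
    {A : Type*} [AddCommGroup A] [Fintype A] (k : ℕ)
    (hcard : Fintype.card A = k) (hk : 3 ≤ k) :
    G.Colorable k ↔ ∃ f : V ⊕ V → A, IsAddColoring (pendantGraph G) f  := by
  classical
  constructor
  · rintro ⟨C⟩
    obtain ⟨b, hb⟩ := Fintype.exists_ne_of_one_lt_card (by omega) (0 : A)
    let e : Fin k ≃ A := (Fintype.equivFinOfCardEq hcard).symm
    let c : V → A := fun u => e (C u)
    have hc : ∀ {u v : V}, G.Adj u v → c u ≠ c v := by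
      intro u v h hne
      exact C.valid h (e.injective hne)
    refine ⟨Sum.elim (fun u => c u + b)
      (fun u => c u - ∑ v ∈ G.neighborFinset u, (c v + b)), ?_⟩
    have hL : ∀ u, nsum (pendantGraph G) (Sum.elim (fun u => c u + b)
        (fun u => c u - ∑ v ∈ G.neighborFinset u, (c v + b))) (Sum.inl u) = c u := by
      intro u
      rw [nsum_pendant_inl]
      simp only [Sum.elim_inl, Sum.elim_inr]
      abel
    have hR : ∀ u, nsum (pendantGraph G) (Sum.elim (fun u => c u + b)
        (fun u => c u - ∑ v ∈ G.neighborFinset u, (c v + b))) (Sum.inr u) = c u + b := by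
      intro u
      rw [nsum_pendant_inr]; rfl
    rintro (u | u) (v | v) h
    · rw [hL, hL]; exact hc h
    · cases h; rw [hL, hR]; exact fun h => hb (left_eq_add.mp h)
    · cases h; rw [hR, hL]; exact fun h => hb (left_eq_add.mp h.symm)
    · exact h.elim
  · rintro ⟨f, hf⟩
    have C : G.Coloring A :=
      SimpleGraph.Coloring.mk (fun u => nsum (pendantGraph G) f (Sum.inl u))
        (fun h => hf h)
    exact hcard ▸ C.colorable
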